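/- Let α > 1, c ≥ 0, and let M : (0,∞) → [0,∞) be nondecreasing. If lim_{n→∞} n^{2(α−1)} M(n^{−2α}) = c, then lim_{ε→0+} ε^{(1/α)−1} M(ε) = c. -/
import Mathlib


open Set Filter Topology

/-- Let α > 1, c ≥ 0, M : (0,∞) → [0,∞) nondecreasing. If
n^{2(α−1)} M(n^{−2α}) → c, then ε^{(1/α)−1} M(ε) → c as ε → 0+. -/
theorem stmt_15 (α c : ℝ) (hα : 1 < α) (hc : 0 ≤ c)
    (M : ℝ → ℝ) (hMnn : ∀ ε : ℝ, 0 < ε → 0 ≤ M ε)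
    (hMmono : MonotoneOn M (Ioi 0))
    (hlim : Tendsto (fun n : ℕ => (n : ℝ) ^ (2 * (α - 1)) * M ((n : ℝ) ^ (-(2 * α))))
      atTop (𝓝 c)) :
    Tendsto (fun ε : ℝ => ε ^ (1 / α - 1) * M ε) (𝓝[>] 0) (𝓝 c) := by
  set q : ℝ := 2 * α with hqdef
  set p : ℝ := 2 * (α - 1) with hpdef
  set r : ℝ := 1 / α - 1 with hrdef
  have hα0 : (0:ℝ) < α := by linarith
  have hq0 : 0 < q := by positivity
  have hp0 : 0 < p := by rw [hpdef]; nlinarith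
  have hr0 : r < 0 := by
    have : 1 / α < 1 := by rw [div_lt_one hα0]; exact hα
    rw [hrdef]; linarith
  have hqr : -q * r = p := by
    have hα0' : α ≠ 0 := ne_of_gt hα0
    rw [hqdef, hrdef, hpdef]; field_simp; ring
  -- ratio limits
  have hratio : Tendsto (fun n : ℕ => ((n:ℝ) + 1) / (n:ℝ)) atTop (𝓝 1) := by
    have h : Tendsto (fun n : ℕ => 1 + (n:ℝ)⁻¹) atTop (𝓝 (1 + 0)) :=
      tendsto_const_nhds.add tendsto_inv_atTop_nhds_zero_nat
    rw [add_zero] at h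
    refine h.congr' ?_
    filter_upwards [eventually_ge_atTop 1] with n hn
    have hn0 : (n:ℝ) ≠ 0 := by
      have : (0:ℝ) < n := by exact_mod_cast hn
      exact ne_of_gt this
    field_simp
  have hratioP : Tendsto (fun n : ℕ => (((n:ℝ) + 1) / (n:ℝ)) ^ p) atTop (𝓝 1) := by
    have := hratio.rpow_const (Or.inr hp0.le)
    simpa [Real.one_rpow] using this
  have hratioQ : Tendsto (fun n : ℕ => ((n:ℝ) / ((n:ℝ) + 1)) ^ p) atTop (𝓝 1) := by
    have h := (hratio.inv₀ one_ne_zero).rpow_const (Or.inr hp0.le)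
    simp only [inv_one, Real.one_rpow, inv_div] at h
    exact h
  -- upper sequence
  have hU : Tendsto (fun n : ℕ => ((n:ℝ) + 1) ^ p * M ((n:ℝ) ^ (-q))) atTop (𝓝 c) := by
    have h := hratioP.mul hlim
    rw [one_mul] at h
    refine h.congr' ?_
    filter_upwards [eventually_ge_atTop 1] with n hn
    have hn0 : (0:ℝ) < n := by exact_mod_cast hn
    have key : (((n:ℝ) + 1) / (n:ℝ)) ^ p * (n:ℝ) ^ p = ((n:ℝ) + 1) ^ p := by
      rw [← Real.mul_rpow (by positivity) hn0.le, div_mul_cancel₀]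
      exact ne_of_gt hn0
    rw [← mul_assoc, key]
  -- lower sequence
  have hshift : Tendsto (fun n : ℕ => ((n:ℝ) + 1) ^ p * M (((n:ℝ) + 1) ^ (-q)))
      atTop (𝓝 c) := by
    have h := hlim.comp (tendsto_add_atTop_nat 1)
    refine h.congr fun n => ?_
    simp only [Function.comp]
    push_cast
    ring_nf
  have hL : Tendsto (fun n : ℕ => (n:ℝ) ^ p * M (((n:ℝ) + 1) ^ (-q))) atTop (𝓝 c) := by
    have h := hratioQ.mul hshift
    rw [one_mul] at h
    refine h.congr' ?_
    filter_upwards [eventually_ge_atTop 1] with n hn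
    have hn0 : (0:ℝ) < n := by exact_mod_cast hn
    have key : ((n:ℝ) / ((n:ℝ) + 1)) ^ p * ((n:ℝ) + 1) ^ p = (n:ℝ) ^ p := by
      rw [← Real.mul_rpow (by positivity) (by positivity), div_mul_cancel₀]
      positivity
    rw [← mul_assoc, key]
  -- the index function
  set N : ℝ → ℕ := fun ε => ⌊ε ^ (-(1/q))⌋₊ with hNdef
  have hN : Tendsto N (𝓝[>] (0:ℝ)) atTop := by
    apply tendsto_nat_floor_atTop.comp
    have h1 : Tendsto (fun ε : ℝ => (ε⁻¹) ^ (1/q)) (𝓝[>] (0:ℝ)) atTop :=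
      (tendsto_rpow_atTop (by positivity)).comp tendsto_inv_nhdsGT_zero
    refine h1.congr' ?_
    filter_upwards [self_mem_nhdsWithin] with ε hε
    have hε0 : (0:ℝ) < ε := hε
    rw [Real.inv_rpow hε0.le, ← Real.rpow_neg hε0.le]
  -- squeeze
  refine tendsto_of_tendsto_of_tendsto_of_le_of_le' (hL.comp hN) (hU.comp hN) ?_ ?_ <;>
  · filter_upwards [Ioo_mem_nhdsGT_of_mem (by constructor <;> norm_num :
        (0:ℝ) ∈ Ico (0:ℝ) 1)] with ε hε
    obtain ⟨hε0, hε1⟩ := hε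
    set t : ℝ := ε ^ (-(1/q)) with htdef
    have ht0 : 0 < t := Real.rpow_pos_of_pos hε0 _
    have ht1 : 1 < t := by
      rw [htdef]
      exact (Real.one_lt_rpow_iff_of_pos hε0).mpr
        (Or.inr ⟨hε1, neg_lt_zero.mpr (by positivity)⟩)
    have hn1 : 1 ≤ N ε := Nat.le_floor (by exact_mod_cast ht1.le)
    have hn0 : (0:ℝ) < (N ε : ℝ) := by exact_mod_cast hn1
    have hnt : ((N ε : ℕ) : ℝ) ≤ t := Nat.floor_le ht0.le
    have htn : t < (N ε : ℝ) + 1 := Nat.lt_floor_add_one t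
    have hte : t ^ (-q) = ε := by
      rw [htdef, ← Real.rpow_mul hε0.le]
      have : -(1/q) * -q = 1 := by field_simp
      rw [this, Real.rpow_one]
    have hε_le : ε ≤ (N ε : ℝ) ^ (-q) := by
      have h := Real.rpow_le_rpow_of_nonpos hn0 hnt (by linarith : -q ≤ 0)
      rwa [hte] at h
    have hle_ε : ((N ε : ℝ) + 1) ^ (-q) ≤ ε := by
      have h := Real.rpow_le_rpow_of_nonpos ht0 htn.le (by linarith : -q ≤ 0)
      rwa [hte] at h
    have hpos1 : (0:ℝ) < (N ε : ℝ) ^ (-q) := Real.rpow_pos_of_pos hn0 _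
    have hpos2 : (0:ℝ) < ((N ε : ℝ) + 1) ^ (-q) := Real.rpow_pos_of_pos (by positivity) _
    -- bounds on ε ^ r
    have hεr_ge : (N ε : ℝ) ^ p ≤ ε ^ r := by
      have h := Real.rpow_le_rpow_of_nonpos hε0 hε_le hr0.le
      rwa [← Real.rpow_mul hn0.le, hqr] at h
    have hεr_le : ε ^ r ≤ ((N ε : ℝ) + 1) ^ p := by
      have h := Real.rpow_le_rpow_of_nonpos hpos2 hle_ε hr0.le
      rwa [← Real.rpow_mul (by positivity), hqr] at h
    -- bounds on M ε
    have hM_le : M ε ≤ M ((N ε : ℝ) ^ (-q)) := hMmono hε0 hpos1 hε_le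
    have hM_ge : M (((N ε : ℝ) + 1) ^ (-q)) ≤ M ε := hMmono hpos2 hε0 hle_ε
    simp only [Function.comp]
    first
    | exact mul_le_mul hεr_ge hM_ge (hMnn _ hpos2) (Real.rpow_nonneg hε0.le _)
    | exact mul_le_mul hεr_le hM_le (hMnn _ hε0) (by positivity)
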